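/- A nonempty closed convex set K ⊂ ℝⁿ is a C-pseudo-cone (i.e., a closed convex set not containing the origin, satisfying λK ⊆ K for all λ ≥ 1, and with recession cone equal to C) if and only if o ∉ K and K + C = K ⊆ C. -/

import Mathlib

open Set Metric MeasureTheory
open scoped InnerProductSpace Pointwise

noncomputable section

abbrev E (n : ℕ) := EuclideanSpace ℝ (Fin n)

/-- The dual cone `C° = {x : ⟪x,y⟫ ≤ 0 ∀ y ∈ C}`. -/
def dualCone {n : ℕ} (C : Set (E n)) : Set (E n) := {x | ∀ y ∈ C, ⟪x, y⟫_ℝ ≤ 0}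

/-- `Ω_C = S^{n-1} ∩ int C`. -/
def OmegaC {n : ℕ} (C : Set (E n)) : Set (E n) := sphere (0 : E n) 1 ∩ interior C

/-- `Ω_{C°} = S^{n-1} ∩ int C°`. -/
def OmegaCp {n : ℕ} (C : Set (E n)) : Set (E n) := sphere (0 : E n) 1 ∩ interior (dualCone C)

/-- `C` is a closed convex pointed cone with nonempty interior. -/
structure IsPointedCone {n : ℕ} (C : Set (E n)) : Prop where
  closed : IsClosed C
  convex : Convex ℝ C
  cone : ∀ r : ℝ, 0 ≤ r → ∀ x ∈ C, r • x ∈ C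
  pointed : C ∩ (-C) = {(0 : E n)}
  intNonempty : (interior C).Nonempty

/-- `K` is a `C`-pseudo-cone: nonempty, closed, convex, `0 ∉ K`, `K + C = K ⊆ C`. -/
def IsPseudoCone {n : ℕ} (C K : Set (E n)) : Prop :=
  K.Nonempty ∧ IsClosed K ∧ Convex ℝ K ∧ (0 : E n) ∉ K ∧ K + C = K ∧ K ⊆ C

/-- The support function `h_K(u) = sup {⟪u,y⟫ : y ∈ K}`. -/
def suppFn {n : ℕ} (K : Set (E n)) (u : E n) : ℝ := sSup ((fun y => ⟪u, y⟫_ℝ) '' K)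

/-- The radial function `ρ_K(v) = min {r > 0 : r v ∈ K}`. -/
def radialFn {n : ℕ} (K : Set (E n)) (v : E n) : ℝ := sInf {r : ℝ | 0 < r ∧ r • v ∈ K}

/-- `u` is an outer normal vector of `K` at `x`. -/
def IsNormalAt {n : ℕ} (K : Set (E n)) (u x : E n) : Prop :=
  x ∈ K ∧ ∀ y ∈ K, ⟪u, y⟫_ℝ ≤ ⟪u, x⟫_ℝ

/-- The pseudo-subdifferential `∂•K`. -/
def pseudoSubdiff {n : ℕ} (C K : Set (E n)) : Set (E n × E n) :=
  {p | p.1 ∈ OmegaC C ∧ p.2 ∈ OmegaCp C ∧ IsNormalAt K p.2 (radialFn K p.1 • p.1)}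

/-- A nonempty closed convex set `K` is a `C`-pseudo-cone (i.e. `0 ∉ K`,
`λK ⊆ K` for `λ ≥ 1`, and recession cone `{z : K + z ⊆ K}` equal to `C`)
iff `0 ∉ K` and `K + C = K ⊆ C`. -/
theorem stmt0 {n : ℕ} (C K : Set (E n)) (hC : IsPointedCone C)
    (hne : K.Nonempty) (hcl : IsClosed K) (hconv : Convex ℝ K) :
    ((0 : E n) ∉ K ∧ (∀ l : ℝ, 1 ≤ l → l • K ⊆ K) ∧ {z : E n | ∀ x ∈ K, x + z ∈ K} = C)
      ↔ ((0 : E n) ∉ K ∧ K + C = K ∧ K ⊆ C) := by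
  obtain ⟨x0, hx0⟩ := hne
  have h0C : (0 : E n) ∈ C := by
    obtain ⟨y, hy⟩ := hC.intNonempty
    have := hC.cone 0 le_rfl y (interior_subset hy)
    simpa using this
  constructor
  · rintro ⟨h0, hlam, hrec⟩
    refine ⟨h0, ?_, ?_⟩
    · -- K + C = K
      apply Set.Subset.antisymm
      · rintro a ⟨x, hx, c, hc, rfl⟩
        have : c ∈ {z : E n | ∀ x ∈ K, x + z ∈ K} := by rw [hrec]; exact hc
        exact this x hx
      · intro x hx
        exact ⟨x, hx, 0, h0C, by simp⟩
    · -- K ⊆ C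
      intro x hx
      rw [← hrec]
      intro y hy
      -- sequence g m = (1 - 1/(m+1)) • y + x ∈ K, tends to y + x
      have hmem : ∀ m : ℕ, (1 - 1/((m:ℝ)+1)) • y + x ∈ K := by
        intro m
        have hm1 : (1:ℝ) ≤ (m:ℝ)+1 := by
          have := Nat.cast_nonneg (α := ℝ) m; linarith
        have hpos : (0:ℝ) < (m:ℝ)+1 := by positivity
        have hxK : ((m:ℝ)+1) • x ∈ K :=
          hlam ((m:ℝ)+1) hm1 (Set.smul_mem_smul_set hx)
        have ha : (0:ℝ) ≤ 1 - 1/((m:ℝ)+1) := by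
          rw [sub_nonneg]
          exact div_le_one_of_le₀ hm1 hpos.le
        have hb : (0:ℝ) ≤ 1/((m:ℝ)+1) := by positivity
        have hab : (1 - 1/((m:ℝ)+1)) + 1/((m:ℝ)+1) = 1 := by ring
        have := hconv hy hxK ha hb hab
        have heq : (1/((m:ℝ)+1)) • (((m:ℝ)+1) • x) = x := by
          rw [smul_smul, one_div, inv_mul_cancel₀ hpos.ne', one_smul]
        rwa [heq] at this
      have htend : Filter.Tendsto (fun m : ℕ => (1 - 1/((m:ℝ)+1)) • y + x)
          Filter.atTop (nhds (y + x)) := by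
        have h1 : Filter.Tendsto (fun m : ℕ => (1 - 1/((m:ℝ)+1))) Filter.atTop (nhds 1) := by
          have := tendsto_one_div_add_atTop_nhds_zero_nat (𝕜 := ℝ)
          simpa using Filter.Tendsto.const_sub 1 this
        have := (h1.smul_const y).add (tendsto_const_nhds (x := x))
        simpa using this
      exact hcl.mem_of_tendsto htend (Filter.Eventually.of_forall hmem)
  · rintro ⟨h0, hsum, hsub⟩
    refine ⟨h0, ?_, ?_⟩
    · -- λ • K ⊆ K
      intro l hl
      rintro _ ⟨x, hx, rfl⟩
      have hc : (l - 1) • x ∈ C := hC.cone (l-1) (by linarith) x (hsub hx)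
      have : x + (l-1) • x ∈ K := by
        rw [← hsum]; exact ⟨x, hx, (l-1) • x, hc, rfl⟩
      have heq : x + (l-1) • x = l • x := by
        rw [sub_smul, one_smul]; abel
      rwa [heq] at this
    · -- rec K = C
      apply Set.Subset.antisymm
      · intro z hz
        -- z ∈ rec K → z ∈ C
        have hmem : ∀ m : ℕ, x0 + ((m:ℝ)+1) • z ∈ K := by
          intro m
          induction m with
          | zero => simpa using hz x0 hx0
          | succ k ih =>
            have := hz _ ih
            have heq : x0 + ((k:ℝ)+1) • z + z = x0 + (((k:ℝ)+1)+1) • z := by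
              module
            rw [heq] at this
            have hcast : ((k+1:ℕ):ℝ)+1 = ((k:ℝ)+1)+1 := by push_cast; ring
            rw [hcast]; exact this
        have hCmem : ∀ m : ℕ, (1/((m:ℝ)+1)) • x0 + z ∈ C := by
          intro m
          have hpos : (0:ℝ) < (m:ℝ)+1 := by positivity
          have := hC.cone (1/((m:ℝ)+1)) (by positivity) _ (hsub (hmem m))
          have heq : (1/((m:ℝ)+1)) • (x0 + ((m:ℝ)+1) • z)
              = (1/((m:ℝ)+1)) • x0 + z := by
            rw [smul_add, smul_smul, one_div, inv_mul_cancel₀ hpos.ne', one_smul]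
          rwa [heq] at this
        have htend : Filter.Tendsto (fun m : ℕ => (1/((m:ℝ)+1)) • x0 + z)
            Filter.atTop (nhds z) := by
          have h1 := tendsto_one_div_add_atTop_nhds_zero_nat (𝕜 := ℝ)
          have := (h1.smul_const x0).add (tendsto_const_nhds (x := z))
          simpa using this
        exact hC.closed.mem_of_tendsto htend (Filter.Eventually.of_forall hCmem)
      · intro c hc x hx
        rw [← hsum]; exact ⟨x, hx, c, hc, rfl⟩
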